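/- Brown's identity: for a prior G on ℝ with marginal density f_G(x) = ∫ φ(x-θ) dG(θ), the Bayes risk of the posterior-mean rule δ^B(x) = x + f_G'(x)/f_G(x) satisfies r(G, δ^B) = 1 - I(f_G), where I(f) = ∫ (f'(x))²/f(x) dx is the Fisher information for location, provided G has compact support (ensuring all integrals converge). -/

import Mathlib

open MeasureTheory Real

/-- Standard Gaussian density. -/
noncomputable def gauss (u : ℝ) : ℝ := (Real.sqrt (2 * Real.pi))⁻¹ * Real.exp (-u ^ 2 / 2)

lemma gauss_pos (u : ℝ) : 0 < gauss u := by
  have h : (0:ℝ) < Real.sqrt (2 * Real.pi) := Real.sqrt_pos.2 (by positivity)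
  exact mul_pos (inv_pos.2 h) (Real.exp_pos _)

lemma gauss_continuous : Continuous gauss := by
  unfold gauss
  continuity

lemma hasDerivAt_gauss (u : ℝ) : HasDerivAt gauss (-u * gauss u) u := by
  have h1 : HasDerivAt (fun u : ℝ => -u ^ 2 / 2) (-u) u := by
    have := ((hasDerivAt_pow 2 u).neg).div_const 2
    simpa using this.congr_deriv (by ring)
  have h2 := (h1.exp).const_mul (Real.sqrt (2 * Real.pi))⁻¹
  unfold gauss
  exact h2.congr_deriv (by ring)

lemma sqrt_two_pi_ge_two : (2:ℝ) ≤ Real.sqrt (2 * Real.pi) := by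
  have h1 := Real.sq_sqrt (by positivity : (0:ℝ) ≤ 2 * Real.pi)
  have h2 := Real.sqrt_nonneg (2 * Real.pi)
  nlinarith [Real.pi_gt_three]

lemma gauss_le_one (u : ℝ) : gauss u ≤ 1 := by
  have h2 : Real.exp (-u ^ 2 / 2) ≤ 1 := by
    rw [Real.exp_le_one_iff]; nlinarith [sq_nonneg u]
  have h : (1:ℝ) ≤ Real.sqrt (2 * Real.pi) := le_trans (by norm_num) sqrt_two_pi_ge_two
  calc (Real.sqrt (2 * Real.pi))⁻¹ * Real.exp (-u ^ 2 / 2) ≤ 1 * 1 := by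
        apply mul_le_mul _ h2 (Real.exp_pos _).le (by norm_num)
        rw [inv_le_one_iff₀]; right; exact h
    _ = 1 := by norm_num

lemma abs_mul_gauss_le_one (u : ℝ) : |u| * gauss u ≤ 1 := by
  have key : |u| * Real.exp (-u ^ 2 / 2) ≤ 2 := by
    have h1 : |u| ≤ Real.exp (u ^ 2 / 2) * 2 := by
      have := Real.add_one_le_exp (u ^ 2 / 2)
      nlinarith [sq_nonneg (|u| - 1), sq_abs u, abs_nonneg u, Real.exp_pos (u^2/2)]
    have h2 : (0:ℝ) < Real.exp (u ^ 2 / 2) := Real.exp_pos _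
    rw [show (-u^2/2 : ℝ) = -(u^2/2) by ring, Real.exp_neg]
    rw [mul_inv_le_iff₀ h2]
    linarith
  have h : (2:ℝ) ≤ Real.sqrt (2 * Real.pi) := sqrt_two_pi_ge_two
  have hs : (0:ℝ) < Real.sqrt (2 * Real.pi) := by linarith
  unfold gauss
  rw [mul_comm ((Real.sqrt (2 * Real.pi))⁻¹) _, ← mul_assoc, inv_eq_one_div,
    mul_one_div, div_le_one hs]
  linarith

lemma sq_mul_gauss_le_one (u : ℝ) : u ^ 2 * gauss u ≤ 1 := by
  have key : u ^ 2 * Real.exp (-u ^ 2 / 2) ≤ 2 := by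
    have h1 : u ^ 2 / 2 ≤ Real.exp (u ^ 2 / 2) := by
      nlinarith [Real.add_one_le_exp (u ^ 2 / 2)]
    have h2 : (0:ℝ) < Real.exp (u ^ 2 / 2) := Real.exp_pos _
    rw [show (-u^2/2 : ℝ) = -(u^2/2) by ring, Real.exp_neg, mul_inv_le_iff₀ h2]
    linarith
  have h : (2:ℝ) ≤ Real.sqrt (2 * Real.pi) := sqrt_two_pi_ge_two
  have hs : (0:ℝ) < Real.sqrt (2 * Real.pi) := by linarith
  unfold gauss
  rw [mul_comm ((Real.sqrt (2 * Real.pi))⁻¹) _, ← mul_assoc, inv_eq_one_div,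
    mul_one_div, div_le_one hs]
  linarith

lemma gauss_anti {a b : ℝ} (h : |a| ≤ |b|) : gauss b ≤ gauss a := by
  unfold gauss
  have : b ^ 2 ≥ a ^ 2 := by
    rw [← sq_abs a, ← sq_abs b]; exact pow_le_pow_left₀ (abs_nonneg a) h 2
  apply mul_le_mul_of_nonneg_left (Real.exp_le_exp.2 (by linarith)) (by positivity)

lemma integrable_gauss : Integrable gauss := by
  have h := (integrable_exp_neg_mul_sq (by norm_num : (0:ℝ) < 2⁻¹)).const_mul
    (Real.sqrt (2 * Real.pi))⁻¹
  refine h.congr (Filter.Eventually.of_forall fun u => ?_)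
  unfold gauss
  ring_nf

lemma integrable_sq_mul_gauss : Integrable (fun u : ℝ => u ^ 2 * gauss u) := by
  have hbd := (integrable_exp_neg_mul_sq (by norm_num : (0:ℝ) < 4⁻¹)).const_mul
    (4 * (Real.sqrt (2 * Real.pi))⁻¹)
  refine hbd.mono' ?_ (Filter.Eventually.of_forall fun u => ?_)
  · exact ((continuous_pow 2).mul gauss_continuous).aestronglyMeasurable
  · have h1 : u ^ 2 ≤ 4 * Real.exp (4⁻¹ * u ^ 2) := by
      nlinarith [Real.add_one_le_exp (4⁻¹ * u ^ 2), sq_nonneg u]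
    have hsplit : Real.exp (-u ^ 2 / 2) = Real.exp (-(4⁻¹ * u ^ 2)) * Real.exp (-(4⁻¹ * u ^ 2)) := by
      rw [← Real.exp_add]; ring_nf
    have hc : (0:ℝ) < (Real.sqrt (2 * Real.pi))⁻¹ := by
      have := Real.sqrt_pos.2 (by positivity : (0:ℝ) < 2 * Real.pi); positivity
    have hnn : 0 ≤ u ^ 2 * gauss u := mul_nonneg (sq_nonneg u) (gauss_pos u).le
    rw [Real.norm_eq_abs, abs_of_nonneg hnn]
    unfold gauss
    rw [hsplit]
    have h2 : u ^ 2 * Real.exp (-(4⁻¹ * u ^ 2)) ≤ 4 := by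
      have he : Real.exp (-(4⁻¹ * u ^ 2)) = (Real.exp (4⁻¹ * u ^ 2))⁻¹ := Real.exp_neg _
      rw [he, mul_inv_le_iff₀ (Real.exp_pos _)]
      linarith
    have hexp : (0:ℝ) < Real.exp (-(4⁻¹ * u ^ 2)) := Real.exp_pos _
    calc u ^ 2 * ((Real.sqrt (2 * Real.pi))⁻¹ * (Real.exp (-(4⁻¹ * u ^ 2)) * Real.exp (-(4⁻¹ * u ^ 2))))
        = (u ^ 2 * Real.exp (-(4⁻¹ * u ^ 2))) * ((Real.sqrt (2 * Real.pi))⁻¹ * Real.exp (-(4⁻¹ * u ^ 2))) := by ring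
      _ ≤ 4 * ((Real.sqrt (2 * Real.pi))⁻¹ * Real.exp (-(4⁻¹ * u ^ 2))) := by
          apply mul_le_mul_of_nonneg_right h2 (by positivity)
      _ = 4 * (Real.sqrt (2 * Real.pi))⁻¹ * Real.exp (-4⁻¹ * u ^ 2) := by ring_nf

lemma integrable_abs_mul_gauss : Integrable (fun u : ℝ => |u| * gauss u) := by
  refine (integrable_gauss.add integrable_sq_mul_gauss).mono' ?_
    (Filter.Eventually.of_forall fun u => ?_)
  · exact (continuous_abs.mul gauss_continuous).aestronglyMeasurable
  · have hnn : 0 ≤ |u| * gauss u := mul_nonneg (abs_nonneg u) (gauss_pos u).le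
    rw [Real.norm_eq_abs, abs_of_nonneg hnn]
    have h1 : |u| ≤ 1 + u ^ 2 := by nlinarith [sq_abs u, sq_nonneg (|u| - 1)]
    have := mul_le_mul_of_nonneg_right h1 (gauss_pos u).le
    show |u| * gauss u ≤ gauss u + u ^ 2 * gauss u
    nlinarith

lemma integrable_id_mul_gauss : Integrable (fun u : ℝ => u * gauss u) := by
  refine integrable_abs_mul_gauss.mono' ?_ (Filter.Eventually.of_forall fun u => ?_)
  · exact (continuous_id.mul gauss_continuous).aestronglyMeasurable
  · rw [Real.norm_eq_abs, abs_mul, abs_of_nonneg (gauss_pos u).le]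

lemma integral_gauss_eq_one : ∫ u : ℝ, gauss u = 1 := by
  have h : ∫ u : ℝ, gauss u = (Real.sqrt (2 * Real.pi))⁻¹ * ∫ u : ℝ, Real.exp (-2⁻¹ * u ^ 2) := by
    rw [← integral_const_mul]
    congr 1 with u
    unfold gauss; ring_nf
  rw [h, integral_gaussian]
  have h2 : (Real.pi / 2⁻¹) = 2 * Real.pi := by ring
  rw [h2]
  have hs : (0:ℝ) < Real.sqrt (2 * Real.pi) := Real.sqrt_pos.2 (by positivity)
  field_simp

lemma integral_sq_mul_gauss : ∫ u : ℝ, u ^ 2 * gauss u = 1 := by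
  have key := integral_mul_deriv_eq_deriv_mul_of_integrable
    (u := fun x : ℝ => x) (v := gauss) (u' := fun _ => (1:ℝ)) (v' := fun x => -x * gauss x)
    (fun x _ => hasDerivAt_id x) (fun x _ => hasDerivAt_gauss x)
    ?_ ?_ ?_
  · have lhs : ∫ x : ℝ, x * (-x * gauss x) = -∫ x : ℝ, x ^ 2 * gauss x := by
      rw [← integral_neg]; congr 1 with x; ring
    rw [lhs] at key
    have : -∫ x : ℝ, x ^ 2 * gauss x = -(1:ℝ) := by
      rw [key]
      simp only [Pi.mul_apply, one_mul]
      rw [integral_gauss_eq_one]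
    linarith
  · refine integrable_sq_mul_gauss.neg.congr (Filter.Eventually.of_forall fun x => ?_)
    simp only [Pi.mul_apply, Pi.neg_apply]; ring
  · refine integrable_gauss.congr (Filter.Eventually.of_forall fun x => ?_)
    simp only [Pi.mul_apply]; ring
  · refine integrable_id_mul_gauss.congr (Filter.Eventually.of_forall fun x => ?_)
    simp only [Pi.mul_apply]

set_option maxHeartbeats 1000000 in
/-- Brown's identity: for a compactly supported prior `G` with marginal density
`f_G = φ * G`, the Bayes risk of the posterior-mean rule `δᴮ(x) = x + f_G'(x)/f_G(x)`
equals `1 - I(f_G)` where `I(f) = ∫ f'(x)²/f(x) dx` is the Fisher information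
for location. -/
theorem brown_identity (G : Measure ℝ) [IsProbabilityMeasure G]
    (R : ℝ) (hsupp : ∀ᵐ t ∂G, t ∈ Set.Icc (-R) R)
    (fG : ℝ → ℝ) (hfG : ∀ y, fG y = ∫ t, gauss (y - t) ∂G) :
    ∫ t, (∫ x, ((x + deriv fG x / fG x) - t) ^ 2 * gauss (x - t)) ∂G =
      1 - ∫ x, (deriv fG x) ^ 2 / fG x := by
  classical
  -- R is nonnegative
  have hR : 0 ≤ R := by
    have hne : (ae G).NeBot := ae_neBot.2 (IsProbabilityMeasure.ne_zero (μ := G))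
    obtain ⟨t, ht⟩ := hsupp.exists
    linarith [ht.1, ht.2]
  set d : ℝ → ℝ := fun x => deriv fG x / fG x with hd
  -- bounded measurable functions are integrable over G
  have hGint : ∀ (f : ℝ → ℝ) (C : ℝ), AEStronglyMeasurable f G →
      (∀ᵐ t ∂G, ‖f t‖ ≤ C) → Integrable f G :=
    fun f C hm hb => (integrable_const C).mono' hm hb
  have hGgauss : ∀ x : ℝ, Integrable (fun t => gauss (x - t)) G := fun x =>
    hGint _ 1 ((gauss_continuous.comp (continuous_const.sub continuous_id)).aestronglyMeasurable)
      (Filter.Eventually.of_forall fun t => by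
        rw [Real.norm_eq_abs, abs_of_pos (gauss_pos _)]; exact gauss_le_one _)
  -- positivity of the marginal density
  have hfpos : ∀ x, 0 < fG x := by
    intro x
    rw [hfG x]
    have hmono : ∀ᵐ t ∂G, gauss (|x| + R) ≤ gauss (x - t) := by
      filter_upwards [hsupp] with t ht
      apply gauss_anti
      rw [abs_of_nonneg (by positivity : (0:ℝ) ≤ |x| + R)]
      have h1 : |x - t| ≤ |x| + |t| := abs_sub x t
      have h2 : |t| ≤ R := abs_le.2 ⟨ht.1, ht.2⟩
      linarith
    calc (0:ℝ) < gauss (|x| + R) := gauss_pos _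
      _ = ∫ _t, gauss (|x| + R) ∂G := by rw [integral_const]; simp
      _ ≤ ∫ t, gauss (x - t) ∂G := integral_mono_ae (integrable_const _) (hGgauss x) hmono
  -- differentiation under the integral sign
  have hderiv : ∀ x, HasDerivAt fG (∫ t, -((x - t) * gauss (x - t)) ∂G) x := by
    intro x
    have hfG' : fG = fun y => ∫ t, gauss (y - t) ∂G := funext hfG
    rw [hfG']
    have key := hasDerivAt_integral_of_dominated_loc_of_deriv_le (μ := G)
      (F := fun y t => gauss (y - t)) (F' := fun y t => -((y - t) * gauss (y - t)))
      (x₀ := x) (bound := fun _ => 1) (s := Metric.ball x 1) (Metric.ball_mem_nhds x one_pos)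
      (Filter.Eventually.of_forall fun y =>
        (gauss_continuous.comp (continuous_const.sub continuous_id)).aestronglyMeasurable)
      (hGgauss x)
      ((((continuous_const.sub continuous_id).mul
        (gauss_continuous.comp (continuous_const.sub continuous_id))).neg.aestronglyMeasurable :
          AEStronglyMeasurable (fun t : ℝ => -((x - t) * gauss (x - t))) G))
      (Filter.Eventually.of_forall fun t => fun y _ => by
        rw [Real.norm_eq_abs, abs_neg, abs_mul, abs_of_pos (gauss_pos _)]
        exact abs_mul_gauss_le_one _)
      (integrable_const 1)
      (Filter.Eventually.of_forall fun t => fun y _ => by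
        have h := (hasDerivAt_gauss (y - t)).comp y ((hasDerivAt_id y).sub_const t)
        exact h.congr_deriv (by ring))
    exact key.2
  have hf'_eq : ∀ x, deriv fG x = ∫ t, -((x - t) * gauss (x - t)) ∂G := fun x => (hderiv x).deriv
  have hint_xt : ∀ x : ℝ, Integrable (fun t => (x - t) * gauss (x - t)) G := fun x =>
    hGint _ 1 (((continuous_const.sub continuous_id).mul
        (gauss_continuous.comp (continuous_const.sub continuous_id))).aestronglyMeasurable)
      (Filter.Eventually.of_forall fun t => by
        rw [Real.norm_eq_abs, abs_mul, abs_of_pos (gauss_pos _)]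
        exact abs_mul_gauss_le_one _)
  have hf'_eq' : ∀ x, ∫ t, (x - t) * gauss (x - t) ∂G = - deriv fG x := by
    intro x
    rw [hf'_eq x, ← integral_neg]
    simp
  have hfG_cont : Continuous fG :=
    continuous_iff_continuousAt.2 fun x => (hderiv x).differentiableAt.continuousAt
  have hdm : Measurable d := (measurable_deriv fG).div hfG_cont.measurable
  -- bound on the derivative
  have habs_f' : ∀ x, |deriv fG x| ≤ (|x| + R) * fG x := by
    intro x
    have hb : ‖∫ t, -((x - t) * gauss (x - t)) ∂G‖ ≤ ∫ t, (|x| + R) * gauss (x - t) ∂G := by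
      apply norm_integral_le_of_norm_le ((hGgauss x).const_mul _)
      filter_upwards [hsupp] with t ht
      rw [Real.norm_eq_abs, abs_neg, abs_mul, abs_of_pos (gauss_pos _)]
      have h2 : |t| ≤ R := abs_le.2 ⟨ht.1, ht.2⟩
      have h1 : |x - t| ≤ |x| + R := by
        have := abs_sub x t; linarith
      exact mul_le_mul_of_nonneg_right h1 (gauss_pos _).le
    rw [hf'_eq x, hfG x]
    calc |∫ t, -((x - t) * gauss (x - t)) ∂G| ≤ ∫ t, (|x| + R) * gauss (x - t) ∂G := hb
      _ = (|x| + R) * ∫ t, gauss (x - t) ∂G := integral_const_mul _ _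
  have hd_bound : ∀ x, |d x| ≤ |x| + R := by
    intro x
    rw [hd]
    simp only
    rw [abs_div, abs_of_pos (hfpos x), div_le_iff₀ (hfpos x)]
    exact habs_f' x
  -- the cross+quadratic term
  set g : ℝ → ℝ → ℝ := fun t x => (2 * d x * (x - t) + d x ^ 2) * gauss (x - t) with hg
  set hb : ℝ → ℝ := fun u => (3 * u ^ 2 + 8 * R * |u| + 4 * R ^ 2) * gauss u with hhb
  have hb_int : Integrable hb := by
    have h := ((integrable_sq_mul_gauss.const_mul 3).add
      (integrable_abs_mul_gauss.const_mul (8 * R))).add (integrable_gauss.const_mul (4 * R ^ 2))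
    refine h.congr (Filter.Eventually.of_forall fun u => ?_)
    simp only [Pi.add_apply, hhb]; ring
  have hgh : ∀ t ∈ Set.Icc (-R) R, ∀ x : ℝ, |g t x| ≤ hb (x - t) := by
    intro t ht x
    have htR : |t| ≤ R := abs_le.2 ⟨ht.1, ht.2⟩
    have hdb : |d x| ≤ |x - t| + 2 * R := by
      have h1 : |x| ≤ |x - t| + |t| := by
        have := abs_sub (x - t) (-t)
        simp only [sub_neg_eq_add, sub_add_cancel, abs_neg] at this
        exact this
      have := hd_bound x
      linarith
    have hga := (gauss_pos (x - t)).le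
    simp only [hg, hhb]
    rw [abs_mul, abs_of_pos (gauss_pos (x - t))]
    apply mul_le_mul_of_nonneg_right _ hga
    have htri : |2 * d x * (x - t) + d x ^ 2| ≤ 2 * |d x| * |x - t| + |d x| ^ 2 := by
      calc |2 * d x * (x - t) + d x ^ 2| ≤ |2 * d x * (x - t)| + |d x ^ 2| := abs_add_le _ _
        _ = 2 * |d x| * |x - t| + |d x| ^ 2 := by
            rw [abs_mul, abs_mul, abs_pow]
            norm_num
    have hXnn : 0 ≤ |x - t| := abs_nonneg _
    have hdnn : 0 ≤ |d x| := abs_nonneg _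
    have hsq : |x - t| ^ 2 = (x - t) ^ 2 := sq_abs _
    nlinarith [mul_le_mul_of_nonneg_right hdb hdnn, mul_le_mul_of_nonneg_right hdb hXnn,
      mul_nonneg hR hXnn, sq_nonneg R]
  -- measurability on the product
  have hg_meas : AEStronglyMeasurable (Function.uncurry g) (G.prod volume) := by
    apply Measurable.aestronglyMeasurable
    simp only [Function.uncurry, hg]
    exact ((((hdm.comp measurable_snd).const_mul 2).mul
        (measurable_snd.sub measurable_fst)).add
        ((hdm.comp measurable_snd).pow_const 2)).mul
      (gauss_continuous.measurable.comp (measurable_snd.sub measurable_fst))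
  have hg_sec : ∀ t ∈ Set.Icc (-R) R, Integrable (fun x => g t x) := by
    intro t ht
    refine (hb_int.comp_sub_right t).mono' ?_ (Filter.Eventually.of_forall fun x => ?_)
    · apply Measurable.aestronglyMeasurable
      exact (((hdm.const_mul 2).mul (measurable_id.sub measurable_const)).add
          (hdm.pow_const 2)).mul
        (gauss_continuous.measurable.comp (measurable_id.sub measurable_const))
    · rw [Real.norm_eq_abs]
      exact hgh t ht x
  have hg_prod : Integrable (Function.uncurry g) (G.prod volume) := by
    rw [integrable_prod_iff hg_meas]
    constructor
    · filter_upwards [hsupp] with t ht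
      exact hg_sec t ht
    · refine hGint _ (∫ u, hb u) hg_meas.norm.integral_prod_right' ?_
      filter_upwards [hsupp] with t ht
      have h1 : ∫ x, ‖g t x‖ ≤ ∫ x, hb (x - t) := by
        apply integral_mono (hg_sec t ht).norm (hb_int.comp_sub_right t)
        intro x
        show ‖g t x‖ ≤ hb (x - t)
        rw [Real.norm_eq_abs]
        exact hgh t ht x
      have h2 : ∫ x, hb (x - t) = ∫ u, hb u := integral_sub_right_eq_self hb t
      rw [Real.norm_eq_abs, abs_of_nonneg (integral_nonneg fun x => norm_nonneg _)]
      rw [h2] at h1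
      exact h1
  have hswap := integral_integral_swap hg_prod
  -- pointwise computation of the inner t-integral
  have hinner : ∀ x, ∫ t, g t x ∂G = -(deriv fG x ^ 2 / fG x) := by
    intro x
    have e1 : ∀ t, g t x = 2 * d x * ((x - t) * gauss (x - t)) + d x ^ 2 * gauss (x - t) :=
      fun t => by simp only [hg]; ring
    rw [integral_congr_ae (Filter.Eventually.of_forall e1),
      integral_add ((hint_xt x).const_mul _) ((hGgauss x).const_mul _),
      integral_const_mul, integral_const_mul, hf'_eq' x, ← hfG x]
    have hne : fG x ≠ 0 := (hfpos x).ne'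
    rw [hd]
    field_simp
    ring
  -- decomposition of the x-integral for a.e. t
  have hsq_int : ∀ t : ℝ, Integrable (fun x => (x - t) ^ 2 * gauss (x - t)) :=
    fun t => integrable_sq_mul_gauss.comp_sub_right t
  have hdecomp : ∀ᵐ t ∂G, (∫ x, ((x + d x) - t) ^ 2 * gauss (x - t)) = 1 + ∫ x, g t x := by
    filter_upwards [hsupp] with t ht
    have e : ∀ x, ((x + d x) - t) ^ 2 * gauss (x - t) = (x - t) ^ 2 * gauss (x - t) + g t x :=
      fun x => by simp only [hg]; ring
    rw [integral_congr_ae (Filter.Eventually.of_forall e),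
      integral_add (hsq_int t) (hg_sec t ht)]
    congr 1
    calc ∫ x, (x - t) ^ 2 * gauss (x - t) = ∫ u, u ^ 2 * gauss u :=
          integral_sub_right_eq_self (fun u => u ^ 2 * gauss u) t
      _ = 1 := integral_sq_mul_gauss
  have hI1 : Integrable (fun t => ∫ x, g t x) G := hg_prod.integral_prod_left
  calc ∫ t, (∫ x, ((x + d x) - t) ^ 2 * gauss (x - t)) ∂G
      = ∫ t, (1 + ∫ x, g t x) ∂G := integral_congr_ae hdecomp
    _ = ∫ _t, (1:ℝ) ∂G + ∫ t, (∫ x, g t x) ∂G := integral_add (integrable_const 1) hI1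
    _ = 1 + ∫ x, ∫ t, g t x ∂G := by
        have h1 : ∫ _t, (1:ℝ) ∂G = 1 := by simp
        rw [h1, hswap]
    _ = 1 + ∫ x, -(deriv fG x ^ 2 / fG x) := by
        congr 1
        exact integral_congr_ae (Filter.Eventually.of_forall hinner)
    _ = 1 - ∫ x, deriv fG x ^ 2 / fG x := by rw [integral_neg]; ring
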